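/- If (a,b,c) is a primitive solution of a² + 5b² = c² and p is a prime dividing c, then there exist integers u, v with p = u² + 5v² or 2p = u² + 5v². -/

import Mathlib

theorem aux_rep (p : ℕ) (hp : Nat.Prime p) (u v : ℤ)
    (hdvd : (p:ℤ) ∣ u^2 + 5*v^2) (hpos : 0 < u^2 + 5*v^2) (hlt : u^2 + 5*v^2 < 6*(p:ℤ)) :
    ∃ s t : ℤ, (p : ℤ) = s^2 + 5*t^2 ∨ 2*(p : ℤ) = s^2 + 5*t^2 := by
  obtain ⟨k, hk⟩ := hdvd
  have hp0 : (0:ℤ) < p := by exact_mod_cast hp.pos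
  have hk0 : 0 < k := by nlinarith
  have hk6 : k < 6 := by nlinarith
  interval_cases k
  · exact ⟨u, v, Or.inl (by linarith)⟩
  · exact ⟨u, v, Or.inr (by linarith)⟩
  · -- k = 3
    have h3 : (3:ℤ) ∣ (u+v)*(u-v) := ⟨(p:ℤ) - 2*v^2, by linear_combination hk⟩
    rcases (Int.prime_three.dvd_mul).mp h3 with ⟨w, hw⟩ | ⟨w, hw⟩
    · refine ⟨w - 2*v, w, Or.inr ?_⟩
      have hu : u = 3*w - v := by linarith
      have h9 : (3:ℤ) * (2*(p:ℤ)) = 3*((w - 2*v)^2 + 5*w^2) := by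
        rw [hu] at hk; linear_combination (-2 : ℤ) * hk
      exact mul_left_cancel₀ (by norm_num) h9
    · refine ⟨w + 2*v, w, Or.inr ?_⟩
      have hu : u = 3*w + v := by linarith
      have h9 : (3:ℤ) * (2*(p:ℤ)) = 3*((w + 2*v)^2 + 5*w^2) := by
        rw [hu] at hk; linear_combination (-2 : ℤ) * hk
      exact mul_left_cancel₀ (by norm_num) h9
  · -- k = 4
    rcases Int.even_or_odd u with ⟨m, hm⟩ | ⟨m, hm⟩ <;>
      rcases Int.even_or_odd v with ⟨nn, hn⟩ | ⟨nn, hn⟩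
    · refine ⟨m, nn, Or.inl ?_⟩
      rw [hm, hn] at hk
      have h4 : (4:ℤ) * (p:ℤ) = 4*(m^2 + 5*nn^2) := by linear_combination (-1:ℤ)*hk
      exact mul_left_cancel₀ (by norm_num) h4
    · exfalso
      obtain ⟨X, Y, hXY⟩ : ∃ X Y : ℤ, 4*X + 5 = 4*Y :=
        ⟨m^2 + 5*nn^2 + 5*nn, (p:ℤ), by rw [hm, hn] at hk; linear_combination hk⟩
      omega
    · exfalso
      obtain ⟨X, Y, hXY⟩ : ∃ X Y : ℤ, 4*X + 1 = 4*Y :=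
        ⟨m^2 + m + 5*nn^2, (p:ℤ), by rw [hm, hn] at hk; linear_combination hk⟩
      omega
    · exfalso
      obtain ⟨X, Y, hXY⟩ : ∃ X Y : ℤ, 4*X + 6 = 4*Y :=
        ⟨m^2 + m + 5*nn^2 + 5*nn, (p:ℤ), by rw [hm, hn] at hk; linear_combination hk⟩
      omega
  · -- k = 5
    have h5 : (5:ℤ) ∣ u := by
      have hsq : (5:ℤ) ∣ u^2 := ⟨(p:ℤ) - v^2, by linear_combination hk⟩
      exact (by norm_num : Prime (5:ℤ)).dvd_of_dvd_pow hsq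
    obtain ⟨m, hm⟩ := h5
    refine ⟨v, m, Or.inl ?_⟩
    rw [hm] at hk
    have h5' : (5:ℤ) * (p:ℤ) = 5*(v^2 + 5*m^2) := by linear_combination (-1:ℤ)*hk
    exact mul_left_cancel₀ (by norm_num) h5'

theorem stmt_2 (a b c : ℤ) (hc : 0 < c) (h : a^2 + 5*b^2 = c^2)
    (hprim : Int.gcd a b = 1) (p : ℕ) (hp : Nat.Prime p) (hpc : (p : ℤ) ∣ c) :
    ∃ u v : ℤ, (p : ℤ) = u^2 + 5*v^2 ∨ 2*(p : ℤ) = u^2 + 5*v^2 := by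
  by_cases hp2 : p = 2
  · exfalso
    subst hp2
    obtain ⟨d, hd⟩ := hpc
    have hd' : c = 2 * d := by exact_mod_cast hd
    subst hd'
    rcases Int.even_or_odd a with ⟨m, hm⟩ | ⟨m, hm⟩ <;>
      rcases Int.even_or_odd b with ⟨n, hn⟩ | ⟨n, hn⟩
    · have h2 : (2:ℤ) ∣ (Int.gcd a b : ℤ) :=
        Int.dvd_coe_gcd ⟨m, by linarith⟩ ⟨n, by linarith⟩
      rw [hprim] at h2
      norm_num at h2
    · obtain ⟨X, Y, hXY⟩ : ∃ X Y : ℤ, 4*X + 5 = 4*Y :=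
        ⟨m^2 + 5*n^2 + 5*n, d^2, by rw [hm, hn] at h; linear_combination h⟩
      omega
    · obtain ⟨X, Y, hXY⟩ : ∃ X Y : ℤ, 4*X + 1 = 4*Y :=
        ⟨m^2 + m + 5*n^2, d^2, by rw [hm, hn] at h; linear_combination h⟩
      omega
    · obtain ⟨X, Y, hXY⟩ : ∃ X Y : ℤ, 4*X + 6 = 4*Y :=
        ⟨m^2 + m + 5*n^2 + 5*n, d^2, by rw [hm, hn] at h; linear_combination h⟩
      omega
  by_cases hp5 : p = 5
  · exact ⟨0, 1, Or.inl (by subst hp5; norm_num)⟩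
  haveI : Fact p.Prime := ⟨hp⟩
  have hpprime : Prime (p:ℤ) := Nat.prime_iff_prime_int.mp hp
  have hpb : ¬ (p:ℤ) ∣ b := by
    intro hb
    have hcc : (p:ℤ) ∣ c^2 := dvd_pow hpc (by norm_num)
    have ha2 : (p:ℤ) ∣ a^2 := by
      have e : a^2 = c^2 - 5*b^2 := by linarith
      rw [e]
      exact dvd_sub hcc (Dvd.dvd.mul_left (dvd_pow hb (by norm_num)) 5)
    have ha : (p:ℤ) ∣ a := hpprime.dvd_of_dvd_pow ha2
    have h1 : (p:ℤ) ∣ (Int.gcd a b : ℤ) := Int.dvd_coe_gcd ha hb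
    rw [hprim] at h1
    have h2 := Int.le_of_dvd one_pos h1
    have h3 := hp.two_le
    omega
  have hb0 : ((b : ZMod p)) ≠ 0 := fun h0 => hpb ((ZMod.intCast_zmod_eq_zero_iff_dvd b p).mp h0)
  have hc0 : ((c : ZMod p)) = 0 := (ZMod.intCast_zmod_eq_zero_iff_dvd c p).mpr hpc
  have hzero : (a : ZMod p)^2 + 5*(b : ZMod p)^2 = 0 := by
    have h' := congrArg (fun z : ℤ => (z : ZMod p)) h
    push_cast at h'
    rw [hc0] at h'
    linear_combination h'
  set t : ZMod p := (a : ZMod p) / (b : ZMod p) with htdef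
  have ht : t^2 = -5 := by
    rw [htdef, div_pow, div_eq_iff (pow_ne_zero 2 hb0)]
    linear_combination hzero
  set n : ℕ := Nat.sqrt p with hndef
  have hcard : Fintype.card (ZMod p) < Fintype.card (Fin (n+1) × Fin (n+1)) := by
    rw [ZMod.card, Fintype.card_prod, Fintype.card_fin]
    have h1 : p < (n+1) * (n+1) := Nat.lt_succ_sqrt p
    nlinarith
  obtain ⟨q1, q2, hne, heq⟩ := Fintype.exists_ne_map_eq_of_card_lt
    (fun q : Fin (n+1) × Fin (n+1) => ((q.1 : ℕ) : ZMod p) - t * ((q.2 : ℕ) : ZMod p)) hcard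
  set u : ℤ := ((q1.1 : ℕ) : ℤ) - ((q2.1 : ℕ) : ℤ) with hudef
  set v : ℤ := ((q1.2 : ℕ) : ℤ) - ((q2.2 : ℕ) : ℤ) with hvdef
  have huv : ((u : ZMod p)) = t * ((v : ZMod p)) := by
    rw [hudef, hvdef]
    push_cast
    linear_combination heq
  have hdvd : (p:ℤ) ∣ u^2 + 5*v^2 := by
    have hz : (((u^2 + 5*v^2 : ℤ)) : ZMod p) = 0 := by
      push_cast
      linear_combination (((u:ℤ) : ZMod p) + t*((v:ℤ) : ZMod p)) * huv + ((v:ℤ) : ZMod p)^2 * ht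
    exact (ZMod.intCast_zmod_eq_zero_iff_dvd _ p).mp hz
  have hq11 := Fin.is_le q1.1
  have hq21 := Fin.is_le q2.1
  have hq12 := Fin.is_le q1.2
  have hq22 := Fin.is_le q2.2
  have hub : u^2 ≤ (n:ℤ)^2 := by
    rw [hudef]
    apply sq_le_sq' <;> omega
  have hvb : v^2 ≤ (n:ℤ)^2 := by
    rw [hvdef]
    apply sq_le_sq' <;> omega
  have hn2 : (n:ℤ)^2 < (p:ℤ) := by
    have h1 : n ^ 2 ≤ p := Nat.sqrt_le' p
    have h2 : n ^ 2 ≠ p := by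
      intro he
      rcases hp.eq_one_or_self_of_dvd n ⟨n, by rw [← he]; ring⟩ with h3 | h3
      · rw [h3] at he
        norm_num at he
        have := hp.one_lt
        omega
      · rw [h3] at he
        nlinarith [hp.two_le]
    have h3 : n ^ 2 < p := lt_of_le_of_ne h1 h2
    zify at h3
    nlinarith
  have hne0 : u ≠ 0 ∨ v ≠ 0 := by
    by_contra hcon
    push_neg at hcon
    obtain ⟨hu0, hv0⟩ := hcon
    apply hne
    rw [hudef] at hu0
    rw [hvdef] at hv0
    have e1 : q1.1 = q2.1 := Fin.ext (by omega)
    have e2 : q1.2 = q2.2 := Fin.ext (by omega)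
    exact Prod.ext e1 e2
  have hpos : 0 < u^2 + 5*v^2 := by
    rcases hne0 with h1 | h1 <;> positivity
  have hlt : u^2 + 5*v^2 < 6*(p:ℤ) := by nlinarith
  exact aux_rep p hp u v hdvd hpos hlt
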